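/- Suppose m < n and n ≡ m (mod m+1). Then the polynomial f_m divides the polynomial f_n, where f_k is defined by f_1(λ) = -λ, f_2(λ) = λ² - 1, f_k(λ) = -λ·f_{k-1}(λ) - f_{k-2}(λ) for k ≥ 3. -/
import Mathlib


open Polynomial in
theorem stmt_12 (f : ℕ → Polynomial ℝ)
    (h1 : f 1 = -X) (h2 : f 2 = X ^ 2 - 1)
    (hrec : ∀ k, 3 ≤ k → f k = -X * f (k - 1) - f (k - 2))
    (m n : ℕ) (hm : 1 ≤ m) (hmn : m < n) (hcong : n ≡ m [MOD m + 1]) :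
    f m ∣ f n := by
  set g : ℕ → Polynomial ℝ := fun k => if k = 0 then 1 else f k with hg
  have hg0 : g 0 = 1 := rfl
  have hg1 : g 1 = -X := by simpa [hg] using h1
  have hgf : ∀ k, 1 ≤ k → g k = f k := by
    intro k hk
    show (if k = 0 then 1 else f k) = f k
    exact if_neg (by omega)
  have hgrec : ∀ k, g (k + 2) = -X * g (k + 1) - g k := by
    intro k
    rcases Nat.eq_zero_or_pos k with rfl | hk
    · simp only [hg]; norm_num [h1, h2]; ring
    · have h3 : 3 ≤ k + 2 := by omega
      have := hrec (k + 2) h3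
      simp only [Nat.add_sub_cancel] at this
      rw [hgf (k+2) (by omega), hgf (k+1) (by omega), hgf k hk]
      simpa using this
  have key : ∀ a b, g (a + b + 2) = g (a + 1) * g (b + 1) - g a * g b := by
    intro a
    induction a with
    | zero => intro b; rw [Nat.zero_add, hgrec b, hg0, hg1]; ring
    | succ a ih =>
      intro b
      rw [show a + 1 + b + 2 = a + (b + 1) + 2 by omega, ih (b + 1),
        show b + 1 + 1 = b + 2 by omega, hgrec b,
        show a + 1 + 1 = a + 2 by omega, hgrec a]
      ring
  have hdvd : ∀ k, f m ∣ g (m + k * (m + 1)) := by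
    intro k
    induction k with
    | zero => rw [Nat.zero_mul, Nat.add_zero, hgf m hm]
    | succ k ih =>
      have hidx : m + (k + 1) * (m + 1) = (m + k * (m + 1)) + (m - 1) + 2 := by
        rw [Nat.succ_mul]; omega
      rw [hidx, key (m + k * (m + 1)) (m - 1), show m - 1 + 1 = m by omega, hgf m hm]
      exact dvd_sub (Dvd.intro_left _ rfl) (ih.mul_right _)
  have hmod : n % (m + 1) = m := by
    have := hcong
    unfold Nat.ModEq at this
    rwa [Nat.mod_eq_of_lt (by omega : m < m + 1)] at this
  have hn : n = m + (n / (m + 1)) * (m + 1) := by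
    have := Nat.div_add_mod n (m + 1)
    rw [Nat.mul_comm] at this
    omega
  rw [← hgf n (by omega), hn]
  exact hdvd _
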